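/- (Greedy removes half the edges in expectation) Let G = (V,E) be a finite simple graph with no isolated vertices and assign a uniformly random injective labeling (permutation) id of V. A vertex v 'dominates' an edge vu if id(v) is strictly smaller than the ids of all vertices in (N(v) ∪ N(u)) \ {v}. Let Y be half the number of ordered pairs (v,u) with vu ∈ E such that the edge vu is 'removed', where edge wu is removed whenever some neighbor v of u dominates an edge vu. Then 2·E[Y] ≥ |E|. A key intermediate step: for each edge vu, the probability that id(v) is minimal among N(v) ∪ N(u) is at least 1/(d(v)+d(u)). -/

import Mathlib

open scoped Classical

variable {V : Type*} [Fintype V] [DecidableEq V]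

/-- Edge `wu` (with `u` its second endpoint) is removed under labeling `π`:
some neighbor `v` of `u` dominates the edge `vu`, i.e. `π v` is smaller than
the label of every vertex of `(N(v) ∪ N(u)) \ {v}`. -/
def removedEdge (G : SimpleGraph V) [DecidableRel G.Adj]
    (π : V ≃ Fin (Fintype.card V)) (u : V) : Prop :=
  ∃ v, G.Adj v u ∧
    ∀ x ∈ (G.neighborFinset v ∪ G.neighborFinset u) \ {v}, π v < π x

/-- `Y π` is half the number of ordered adjacent pairs `(w,u)` whose edge is removed. -/
noncomputable def Yfun (G : SimpleGraph V) [DecidableRel G.Adj]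
    (π : V ≃ Fin (Fintype.card V)) : ℝ :=
  (1 / 2) * ∑ w : V, ∑ u : V,
    if G.Adj w u ∧ removedEdge G π u then (1 : ℝ) else 0

/-- If `π w` is minimal over `T`, then composing with the swap of `v` and `w` makes `v` minimal. -/
lemma swap_mem_aux {T : Finset V} {v w : V} (hv : v ∈ T)
    (π : V ≃ Fin (Fintype.card V))
    (h : ∀ x ∈ T \ {w}, π w < π x) :
    ∀ x ∈ T \ {v}, ((Equiv.swap v w).trans π) v < ((Equiv.swap v w).trans π) x := by
  intro x hx
  simp only [Finset.mem_sdiff, Finset.mem_singleton] at hx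
  simp only [Equiv.trans_apply, Equiv.swap_apply_left]
  rcases eq_or_ne x w with rfl | hxw
  · rw [Equiv.swap_apply_right]
    exact h v (Finset.mem_sdiff.mpr ⟨hv, by simpa using (Ne.symm hx.2)⟩)
  · rw [Equiv.swap_apply_of_ne_of_ne hx.2 hxw]
    exact h x (Finset.mem_sdiff.mpr ⟨hx.1, by simpa using hxw⟩)

/-- The number of permutations making `v` minimal over `T`, times `|T|`, equals `n!`. -/
lemma count_min (T : Finset V) (v : V) (hv : v ∈ T) :
    (Finset.univ.filter (fun π : V ≃ Fin (Fintype.card V) =>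
      ∀ x ∈ T \ {v}, π v < π x)).card * T.card
      = Fintype.card (V ≃ Fin (Fintype.card V)) := by
  classical
  have hequal : ∀ w ∈ T,
      (Finset.univ.filter (fun π : V ≃ Fin (Fintype.card V) =>
        ∀ x ∈ T \ {w}, π w < π x)).card
      = (Finset.univ.filter (fun π : V ≃ Fin (Fintype.card V) =>
        ∀ x ∈ T \ {v}, π v < π x)).card := by
    intro w hw
    refine Finset.card_nbij' (fun π => (Equiv.swap v w).trans π)
      (fun π => (Equiv.swap w v).trans π) ?_ ?_ ?_ ?_
    · intro π hπ
      simp only [Finset.mem_coe, Finset.mem_filter, Finset.mem_univ, true_and] at hπ ⊢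
      exact swap_mem_aux hv π hπ
    · intro π hπ
      simp only [Finset.mem_coe, Finset.mem_filter, Finset.mem_univ, true_and] at hπ ⊢
      exact swap_mem_aux hw π hπ
    · intro π _
      ext x
      simp [Equiv.swap_comm v w, Equiv.swap_apply_self]
    · intro π _
      ext x
      simp [Equiv.swap_comm v w, Equiv.swap_apply_self]
  have hTne : T.Nonempty := ⟨v, hv⟩
  have hunion : (Finset.univ : Finset (V ≃ Fin (Fintype.card V)))
      = T.biUnion (fun w => Finset.univ.filter (fun π : V ≃ Fin (Fintype.card V) =>
          ∀ x ∈ T \ {w}, π w < π x)) := by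
    apply Finset.Subset.antisymm
    · intro π _
      obtain ⟨w, hw, hmin⟩ := T.exists_min_image (fun x => π x) hTne
      refine Finset.mem_biUnion.mpr ⟨w, hw, ?_⟩
      simp only [Finset.mem_filter, Finset.mem_univ, true_and]
      intro x hx
      simp only [Finset.mem_sdiff, Finset.mem_singleton] at hx
      exact lt_of_le_of_ne (hmin x hx.1) (fun hxe => hx.2 (π.injective hxe.symm))
    · exact Finset.subset_univ _
  have hdisj : ∀ w ∈ T, ∀ w' ∈ T, w ≠ w' →
      Disjoint (Finset.univ.filter (fun π : V ≃ Fin (Fintype.card V) =>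
          ∀ x ∈ T \ {w}, π w < π x))
        (Finset.univ.filter (fun π : V ≃ Fin (Fintype.card V) =>
          ∀ x ∈ T \ {w'}, π w' < π x)) := by
    intro w hw w' hw' hne
    rw [Finset.disjoint_left]
    intro π h1 h2
    simp only [Finset.mem_filter, Finset.mem_univ, true_and] at h1 h2
    have a1 : π w < π w' := h1 w' (Finset.mem_sdiff.mpr ⟨hw', by simpa using (Ne.symm hne)⟩)
    have a2 : π w' < π w := h2 w (Finset.mem_sdiff.mpr ⟨hw, by simpa using hne⟩)
    exact absurd a1 (not_lt.mpr a2.le)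
  have := Finset.card_biUnion hdisj
  rw [← hunion, Finset.card_univ] at this
  rw [this, Finset.sum_congr rfl hequal, Finset.sum_const, smul_eq_mul, mul_comm]

/-- At most one neighbor dominates, and domination implies removal. -/
lemma sum_dom_le (G : SimpleGraph V) [DecidableRel G.Adj]
    (π : V ≃ Fin (Fintype.card V)) (u : V) :
    ∑ v ∈ G.neighborFinset u,
      (if ∀ x ∈ (G.neighborFinset v ∪ G.neighborFinset u) \ {v}, π v < π x
        then (1:ℝ) else 0)
      ≤ if removedEdge G π u then 1 else 0 := by
  by_cases h : removedEdge G π u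
  · simp only [h, if_true]
    rw [Finset.sum_boole]
    norm_cast
    apply Finset.card_le_one.mpr
    intro a ha b hb
    simp only [Finset.mem_filter, SimpleGraph.mem_neighborFinset] at ha hb
    by_contra hne
    have hab : π a < π b := ha.2 b (Finset.mem_sdiff.mpr
      ⟨Finset.mem_union_right _ ((SimpleGraph.mem_neighborFinset G u b).mpr hb.1),
        by simpa using (Ne.symm hne)⟩)
    have hba : π b < π a := hb.2 a (Finset.mem_sdiff.mpr
      ⟨Finset.mem_union_right _ ((SimpleGraph.mem_neighborFinset G u a).mpr ha.1),
        by simpa using hne⟩)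
    exact absurd hab (not_lt.mpr hba.le)
  · simp only [h, if_false]
    apply Finset.sum_nonpos
    intro v hv
    rw [SimpleGraph.mem_neighborFinset] at hv
    rw [if_neg]
    intro hdom
    exact h ⟨v, hv.symm, hdom⟩

/-- Lower bound on the number of permutations making `v` dominate edge `vu`. -/
lemma count_ge (G : SimpleGraph V) [DecidableRel G.Adj] {v u : V} (h : G.Adj v u) :
    (Fintype.card (V ≃ Fin (Fintype.card V)) : ℝ) ≤
    ((Finset.univ.filter (fun π : V ≃ Fin (Fintype.card V) =>
        ∀ x ∈ (G.neighborFinset v ∪ G.neighborFinset u) \ {v}, π v < π x)).card : ℝ)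
      * ((G.degree v : ℝ) + G.degree u) := by
  have hv : v ∈ G.neighborFinset v ∪ G.neighborFinset u :=
    Finset.mem_union_right _ ((SimpleGraph.mem_neighborFinset G u v).mpr h.symm)
  have hkey := count_min (G.neighborFinset v ∪ G.neighborFinset u) v hv
  have hcard : (G.neighborFinset v ∪ G.neighborFinset u).card ≤ G.degree v + G.degree u := by
    refine (Finset.card_union_le _ _).trans ?_
    rw [SimpleGraph.card_neighborFinset_eq_degree, SimpleGraph.card_neighborFinset_eq_degree]
  calc (Fintype.card (V ≃ Fin (Fintype.card V)) : ℝ)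
      = ((Finset.univ.filter (fun π : V ≃ Fin (Fintype.card V) =>
          ∀ x ∈ (G.neighborFinset v ∪ G.neighborFinset u) \ {v}, π v < π x)).card : ℝ)
        * ((G.neighborFinset v ∪ G.neighborFinset u).card : ℝ) := by
        rw_mod_cast [hkey]
    _ ≤ _ := by
        apply mul_le_mul_of_nonneg_left _ (by positivity)
        push_cast
        exact_mod_cast hcard

/-- The fractional relaxation sums to `|E|`. -/
lemma sum_frac (G : SimpleGraph V) [DecidableRel G.Adj] :
    ∑ u : V, ∑ v ∈ G.neighborFinset u,
      ((G.degree u : ℝ) / ((G.degree v : ℝ) + G.degree u)) = G.edgeFinset.card := by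
  classical
  set g : V → V → ℝ := fun u v => (G.degree u : ℝ) / ((G.degree v : ℝ) + G.degree u) with hg
  have hpos : ∀ {u v : V}, G.Adj u v → (0:ℝ) < (G.degree v : ℝ) + G.degree u := by
    intro u v huv
    have : 0 < G.degree u := by
      rw [← SimpleGraph.card_neighborFinset_eq_degree]
      exact Finset.card_pos.mpr ⟨v, (SimpleGraph.mem_neighborFinset G u v).mpr huv⟩
    positivity
  have hrw : ∀ (f : V → V → ℝ), (∑ u : V, ∑ v ∈ G.neighborFinset u, f u v)
      = ∑ u : V, ∑ v : V, if G.Adj u v then f u v else 0 := by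
    intro f
    refine Finset.sum_congr rfl (fun u _ => ?_)
    rw [SimpleGraph.neighborFinset_eq_filter, Finset.sum_filter]
  set S := ∑ u : V, ∑ v ∈ G.neighborFinset u, g u v with hS
  have h1 : S = ∑ u : V, ∑ v : V, if G.Adj u v then g u v else 0 := hrw g
  have h2 : S = ∑ u : V, ∑ v : V, if G.Adj u v then g v u else 0 := by
    rw [h1, Finset.sum_comm]
    refine Finset.sum_congr rfl (fun u _ => Finset.sum_congr rfl (fun v _ => ?_))
    congr 1
    exact propext (G.adj_comm v u)
  have h3 : S + S = ∑ u : V, ∑ v : V, if G.Adj u v then (1:ℝ) else 0 := by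
    nth_rewrite 1 [h1]
    rw [h2, ← Finset.sum_add_distrib]
    refine Finset.sum_congr rfl (fun u _ => ?_)
    rw [← Finset.sum_add_distrib]
    refine Finset.sum_congr rfl (fun v _ => ?_)
    split_ifs with hadj
    · simp only [hg]
      have hp1 := hpos hadj
      have hp2 := hpos hadj.symm
      field_simp
      ring
    · ring
  have h4 : ∑ u : V, ∑ v : V, (if G.Adj u v then (1:ℝ) else 0)
      = 2 * G.edgeFinset.card := by
    have : ∀ u : V, ∑ v : V, (if G.Adj u v then (1:ℝ) else 0) = (G.degree u : ℝ) := by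
      intro u
      rw [Finset.sum_boole]
      congr 1
      rw [← SimpleGraph.card_neighborFinset_eq_degree, SimpleGraph.neighborFinset_eq_filter]
    rw [Finset.sum_congr rfl (fun u _ => this u)]
    rw_mod_cast [SimpleGraph.sum_degrees_eq_twice_card_edges]
  have := h3.trans h4
  linarith

/-- Greedy removes at least half of the edges in expectation over a uniformly
random labeling: `2·E[Y] ≥ |E|`. -/
theorem stmt7 (G : SimpleGraph V) [DecidableRel G.Adj]
    (hiso : ∀ v : V, 0 < G.degree v) :
    (G.edgeFinset.card : ℝ) ≤
      2 * ((Fintype.card (V ≃ Fin (Fintype.card V)) : ℝ)⁻¹ *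
        ∑ π : V ≃ Fin (Fintype.card V), Yfun G π) := by
  classical
  have hne : Nonempty (V ≃ Fin (Fintype.card V)) := ⟨Fintype.equivFin V⟩
  have hc : 0 < (Fintype.card (V ≃ Fin (Fintype.card V)) : ℝ) := by
    exact_mod_cast Fintype.card_pos
  set c : ℝ := (Fintype.card (V ≃ Fin (Fintype.card V)) : ℝ) with hcdef
  -- indicator of domination
  set f : (V ≃ Fin (Fintype.card V)) → V → V → ℝ := fun π v u =>
    if ∀ x ∈ (G.neighborFinset v ∪ G.neighborFinset u) \ {v}, π v < π x then 1 else 0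
    with hfdef
  -- count of dominating permutations
  set N : V → V → ℝ := fun v u =>
    ((Finset.univ.filter (fun π : V ≃ Fin (Fintype.card V) =>
      ∀ x ∈ (G.neighborFinset v ∪ G.neighborFinset u) \ {v}, π v < π x)).card : ℝ) with hNdef
  have hNf : ∀ v u : V, N v u = ∑ π : V ≃ Fin (Fintype.card V), f π v u := by
    intro v u
    rw [hNdef, hfdef, Finset.sum_boole]
  have hdegsum : ∀ (u : V) (K : ℝ),
      ∑ w : V, (if G.Adj w u then K else 0) = (G.degree u : ℝ) * K := by
    intro u K
    rw [← Finset.sum_filter, Finset.sum_const, nsmul_eq_mul]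
    congr 2
    rw [← SimpleGraph.card_neighborFinset_eq_degree]
    congr 1
    ext w
    simp [SimpleGraph.adj_comm]
  rw [show (2:ℝ) * (c⁻¹ * ∑ π : V ≃ Fin (Fintype.card V), Yfun G π)
      = c⁻¹ * (2 * ∑ π : V ≃ Fin (Fintype.card V), Yfun G π) by ring,
    inv_mul_eq_div, le_div_iff₀ hc]
  have hY : (2:ℝ) * ∑ π : V ≃ Fin (Fintype.card V), Yfun G π
      = ∑ π : V ≃ Fin (Fintype.card V), ∑ w : V, ∑ u : V,
          if G.Adj w u ∧ removedEdge G π u then (1:ℝ) else 0 := by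
    rw [Finset.mul_sum]
    refine Finset.sum_congr rfl (fun π _ => ?_)
    rw [Yfun]; ring
  rw [hY]
  have step1 : ∑ π : V ≃ Fin (Fintype.card V), ∑ w : V, ∑ u : V,
      (if G.Adj w u then (∑ v ∈ G.neighborFinset u, f π v u) else 0)
      ≤ ∑ π : V ≃ Fin (Fintype.card V), ∑ w : V, ∑ u : V,
          if G.Adj w u ∧ removedEdge G π u then (1:ℝ) else 0 := by
    refine Finset.sum_le_sum (fun π _ => Finset.sum_le_sum (fun w _ =>
      Finset.sum_le_sum (fun u _ => ?_)))
    rw [ite_and]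
    by_cases h : G.Adj w u
    · rw [if_pos h, if_pos h]
      exact sum_dom_le G π u
    · rw [if_neg h, if_neg h]
  refine le_trans ?_ step1
  -- move the sum over π inside
  have hswap : ∑ π : V ≃ Fin (Fintype.card V), ∑ w : V, ∑ u : V,
      (if G.Adj w u then (∑ v ∈ G.neighborFinset u, f π v u) else 0)
      = ∑ w : V, ∑ u : V, (if G.Adj w u then (∑ v ∈ G.neighborFinset u, N v u) else 0) := by
    rw [Finset.sum_comm]
    refine Finset.sum_congr rfl (fun w _ => ?_)
    rw [Finset.sum_comm]
    refine Finset.sum_congr rfl (fun u _ => ?_)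
    by_cases h : G.Adj w u
    · simp only [h, if_true]
      rw [Finset.sum_comm]
      exact Finset.sum_congr rfl (fun v _ => (hNf v u).symm)
    · simp [h]
  rw [hswap]
  -- now the counting lower bound
  calc (G.edgeFinset.card : ℝ) * c
      = ∑ u : V, ∑ v ∈ G.neighborFinset u,
          ((G.degree u : ℝ) * (c / ((G.degree v : ℝ) + G.degree u))) := by
        rw [show ∀ S : ℝ, S * c = c * S from fun S => mul_comm S c, ← sum_frac G,
          Finset.mul_sum]
        refine Finset.sum_congr rfl (fun u _ => ?_)
        rw [Finset.mul_sum]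
        refine Finset.sum_congr rfl (fun v _ => ?_)
        ring
    _ ≤ ∑ u : V, ∑ v ∈ G.neighborFinset u, ((G.degree u : ℝ) * N v u) := by
        refine Finset.sum_le_sum (fun u _ => Finset.sum_le_sum (fun v hv => ?_))
        have hadj : G.Adj v u := ((SimpleGraph.mem_neighborFinset G u v).mp hv).symm
        have hpos : (0:ℝ) < (G.degree v : ℝ) + G.degree u := by
          have h1 := hiso v; have h2 := hiso u; positivity
        apply mul_le_mul_of_nonneg_left _ (by positivity)
        rw [div_le_iff₀ hpos]
        exact count_ge G hadj
    _ = ∑ u : V, ∑ w : V, (if G.Adj w u then (∑ v ∈ G.neighborFinset u, N v u) else 0) := by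
        refine Finset.sum_congr rfl (fun u _ => ?_)
        rw [hdegsum u (∑ v ∈ G.neighborFinset u, N v u), Finset.mul_sum]
    _ = ∑ w : V, ∑ u : V, (if G.Adj w u then (∑ v ∈ G.neighborFinset u, N v u) else 0) :=
        Finset.sum_comm
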